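/- For every n ≥ 1 and every k with 1 ≤ k ≤ n, the number of dominating sets of the path P_n of cardinality k equals d(P_n, k) = Σ_{m=0}^{⌊(n−k)/2⌋+1} C(k−1, n−k−m) · C(n−k−m+2, m), where C(a, b) denotes the binomial coefficient (taken to be 0 when b < 0 or b > a). -/

import Mathlib

open Finset

/-- `S` is a dominating set of `G`: every vertex not in `S` is adjacent to a vertex of `S`. -/
def IsDominatingSet {V : Type*} (G : SimpleGraph V) (S : Finset V) : Prop :=
  ∀ v : V, v ∉ S → ∃ u ∈ S, G.Adj u v

/-- `S` is an isolate dominating set of `G`: a dominating set whose induced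
subgraph has an isolated vertex. -/
def IsIsolateDominatingSet {V : Type*} (G : SimpleGraph V) (S : Finset V) : Prop :=
  IsDominatingSet G S ∧ ∃ v ∈ S, ∀ u ∈ S, ¬ G.Adj v u

/-- `d(G, i)`: the number of dominating sets of `G` of cardinality `i`. -/
noncomputable def domCount {V : Type*} [Fintype V] (G : SimpleGraph V) (i : ℕ) : ℕ :=
  Set.ncard {S : Finset V | IsDominatingSet G S ∧ S.card = i}

/-- `d₀(G, i)`: the number of isolate dominating sets of `G` of cardinality `i`. -/
noncomputable def isoDomCount {V : Type*} [Fintype V] (G : SimpleGraph V) (i : ℕ) : ℕ :=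
  Set.ncard {S : Finset V | IsIsolateDominatingSet G S ∧ S.card = i}

/-- `γ₀(G)`: the isolate domination number, the minimum cardinality of an
isolate dominating set of `G`. -/
noncomputable def isoDomNumber {V : Type*} [Fintype V] (G : SimpleGraph V) : ℕ :=
  sInf {k : ℕ | ∃ S : Finset V, IsIsolateDominatingSet G S ∧ S.card = k}

/-- Binomial coefficient `C(a, b)` for integer arguments, taken to be `0` when
`b < 0` or `b > a` (in particular when `a < 0`). -/
def chooseZ (a b : ℤ) : ℤ :=
  if 0 ≤ a ∧ 0 ≤ b then (a.toNat).choose b.toNat else 0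

/-! ### chooseZ lemmas -/

lemma chooseZ_neg_right {a b : ℤ} (h : b < 0) : chooseZ a b = 0 := by
  rw [chooseZ, if_neg]; omega

lemma chooseZ_neg_left {a b : ℤ} (h : a < 0) : chooseZ a b = 0 := by
  rw [chooseZ, if_neg]; omega

lemma chooseZ_eq_zero_of_lt {a b : ℤ} (h : a < b) : chooseZ a b = 0 := by
  rw [chooseZ]
  split_ifs with hab
  · rw [Nat.choose_eq_zero_of_lt (by omega)]; rfl
  · rfl

lemma chooseZ_natCast (a b : ℕ) : chooseZ a b = a.choose b := by
  rw [chooseZ, if_pos ⟨Int.ofNat_nonneg a, Int.ofNat_nonneg b⟩, Int.toNat_natCast, Int.toNat_natCast]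

lemma chooseZ_pascal {a : ℤ} (b : ℤ) (ha : 1 ≤ a) :
    chooseZ a b = chooseZ (a - 1) b + chooseZ (a - 1) (b - 1) := by
  rcases lt_trichotomy b 0 with hb | hb | hb
  · rw [chooseZ_neg_right hb, chooseZ_neg_right hb, chooseZ_neg_right (by omega)]; ring
  · subst hb
    simp only [chooseZ]
    rw [if_pos ⟨by omega, le_refl 0⟩, if_pos ⟨by omega, le_refl 0⟩,
      if_neg (by omega)]
    simp
  · have h1 : 0 ≤ a ∧ 0 ≤ b := ⟨by omega, by omega⟩
    rw [chooseZ, chooseZ, chooseZ, if_pos h1, if_pos ⟨by omega, by omega⟩,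
      if_pos ⟨by omega, by omega⟩]
    obtain ⟨A, hA⟩ : ∃ A : ℕ, a = (A : ℤ) + 1 := ⟨(a - 1).toNat, by omega⟩
    obtain ⟨B, hB⟩ : ∃ B : ℕ, b = (B : ℤ) + 1 := ⟨(b - 1).toNat, by omega⟩
    subst hA; subst hB
    have e1 : ((A : ℤ) + 1).toNat = A + 1 := by omega
    have e2 : ((B : ℤ) + 1).toNat = B + 1 := by omega
    have e3 : ((A : ℤ) + 1 - 1).toNat = A := by omega
    have e4 : ((B : ℤ) + 1 - 1).toNat = B := by omega
    rw [e1, e2, e3, e4, Nat.choose_succ_succ]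
    push_cast; ring

/-! ### Gap vectors and counting -/

def Tset (k s : ℕ) : Finset (Fin (k + 1) → Fin 3) :=
  univ.filter fun g => (g 0 : ℕ) ≤ 1 ∧ (g (Fin.last k) : ℕ) ≤ 1 ∧ ∑ i, (g i : ℕ) = s

lemma succAbove_one_zero {k : ℕ} : (1 : Fin (k + 2)).succAbove 0 = 0 := by
  ext
  simp [Fin.succAbove, Fin.lt_def]

lemma succAbove_one_last {k : ℕ} (hk : 1 ≤ k) :
    (1 : Fin (k + 2)).succAbove (Fin.last k) = Fin.last (k + 1) := by
  ext
  simp only [Fin.succAbove, Fin.lt_def]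
  rw [if_neg]
  · simp [Fin.val_succ]
  · simp [Fin.coe_castSucc, Fin.val_last]
    omega

lemma Tset_card_step {k : ℕ} (hk : 1 ≤ k) (s : ℕ) :
    (Tset (k + 1) s).card
      = ∑ v : Fin 3, (if (v : ℕ) ≤ s then (Tset k (s - (v : ℕ))).card else 0) := by
  rw [Finset.card_eq_sum_card_fiberwise
    (f := fun g : Fin (k + 2) → Fin 3 => g 1) (t := univ) (fun x _ => mem_univ _)]
  refine Finset.sum_congr rfl fun v _ => ?_
  have hsum : ∀ g : Fin (k + 2) → Fin 3,
      ∑ i, (g i : ℕ) = (g 1 : ℕ) + ∑ j : Fin (k + 1), (g ((1 : Fin (k + 2)).succAbove j) : ℕ) :=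
    fun g => Fin.sum_univ_succAbove (fun i => (g i : ℕ)) 1
  split_ifs with hv
  · refine Finset.card_nbij' (i := fun g => Fin.removeNth 1 g)
      (j := fun r => Fin.insertNth 1 v r) ?_ ?_ ?_ ?_
    · intro g hg
      simp only [mem_coe, mem_filter, Tset, mem_univ, true_and] at hg ⊢
      obtain ⟨⟨h0, hl, hsg⟩, h1⟩ := hg
      rw [hsum g, h1] at hsg
      refine ⟨?_, ?_, ?_⟩
      · show (g ((1 : Fin (k+2)).succAbove 0) : ℕ) ≤ 1
        rw [succAbove_one_zero]; exact h0
      · show (g ((1 : Fin (k+2)).succAbove (Fin.last k)) : ℕ) ≤ 1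
        rw [succAbove_one_last hk]; exact hl
      · simp only [Fin.removeNth]
        omega
    · intro r hr
      simp only [mem_coe, mem_filter, Tset, mem_univ, true_and] at hr ⊢
      obtain ⟨h0, hl, hsr⟩ := hr
      have e1 : Fin.insertNth (α := fun _ : Fin (k+2) => Fin 3) 1 v r 1 = v :=
        Fin.insertNth_apply_same (α := fun _ : Fin (k+2) => Fin 3) 1 v r
      refine ⟨⟨?_, ?_, ?_⟩, e1⟩
      · rw [← succAbove_one_zero (k := k), Fin.insertNth_apply_succAbove]; exact h0
      · rw [← succAbove_one_last hk, Fin.insertNth_apply_succAbove]; exact hl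
      · rw [hsum _, e1]
        have : ∀ j : Fin (k+1),
            (Fin.insertNth (α := fun _ : Fin (k+2) => Fin 3) 1 v r ((1 : Fin (k+2)).succAbove j) : ℕ) = (r j : ℕ) :=
          fun j => by rw [Fin.insertNth_apply_succAbove]
        rw [Finset.sum_congr rfl fun j _ => this j, hsr]
        omega
    · intro g hg
      simp only [mem_coe, mem_filter] at hg
      rw [Fin.insertNth_eq_iff]
      exact ⟨hg.2.symm, rfl⟩
    · intro r _
      exact Fin.removeNth_insertNth (α := fun _ : Fin (k+2) => Fin 3) 1 v r
  · rw [Finset.card_eq_zero, Finset.eq_empty_iff_forall_notMem]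
    intro g hg
    simp only [mem_filter, Tset, mem_univ, true_and] at hg
    obtain ⟨⟨h0, hl, hsg⟩, h1⟩ := hg
    rw [hsum g, h1] at hsg
    omega

def RHSF (k : ℕ) (S : ℤ) (M : ℕ) : ℤ :=
  ∑ m ∈ Finset.range M, chooseZ ((k : ℤ) - 1) (S - m) * chooseZ (S - m + 2) m

lemma RHSF_zero {k : ℕ} {S : ℤ} (hS : S < 0) (M : ℕ) : RHSF k S M = 0 := by
  refine Finset.sum_eq_zero fun m _ => ?_
  rw [chooseZ_neg_right (by omega), zero_mul]

lemma RHSF_ext {k : ℕ} {S : ℤ} {M M' : ℕ} (h : M ≤ M') (hS : S < M) :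
    RHSF k S M' = RHSF k S M := by
  refine (Finset.sum_subset (Finset.range_subset_range.2 h) fun m _ hm => ?_).symm
  rw [Finset.mem_range, not_lt] at hm
  rw [chooseZ_neg_right (by omega), zero_mul]

lemma RHSF_rec {k : ℕ} (hk : 1 ≤ k) (s : ℕ) :
    RHSF (k + 1) s (s + 3) = RHSF k s (s + 3) + RHSF k ((s : ℤ) - 1) (s + 3)
      + RHSF k ((s : ℤ) - 2) (s + 3) := by
  set S : ℤ := (s : ℤ) with hS
  have step1 : RHSF (k + 1) S (s + 3)
      = RHSF k S (s + 3)
        + ∑ m ∈ Finset.range (s + 3),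
            chooseZ ((k : ℤ) - 1) (S - 1 - m) * chooseZ (S - m + 2) m := by
    rw [RHSF, RHSF, ← Finset.sum_add_distrib]
    refine Finset.sum_congr rfl fun m _ => ?_
    have : (((k + 1 : ℕ) : ℤ) - 1) = (k : ℤ) := by push_cast; ring
    rw [this, chooseZ_pascal (S - m) (by exact_mod_cast hk), add_mul]
    congr 2
    ring_nf
  have step2 : ∑ m ∈ Finset.range (s + 3),
        chooseZ ((k : ℤ) - 1) (S - 1 - m) * chooseZ (S - m + 2) m
      = RHSF k (S - 1) (s + 3)
        + ∑ m ∈ Finset.range (s + 3),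
            chooseZ ((k : ℤ) - 1) (S - 1 - m) * chooseZ (S - m + 1) ((m : ℤ) - 1) := by
    rw [RHSF, ← Finset.sum_add_distrib]
    refine Finset.sum_congr rfl fun m _ => ?_
    rcases lt_or_ge (S - 1 - m) 0 with h | h
    · rw [chooseZ_neg_right h]; ring
    · rw [chooseZ_pascal (m : ℤ) (by omega)]
      have e1 : S - 1 - (m : ℤ) + 2 = S - m + 1 := by ring
      have e2 : S - (m : ℤ) + 2 - 1 = S - m + 1 := by ring
      rw [e1, e2]
      ring
  have step3 : ∑ m ∈ Finset.range (s + 3),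
        chooseZ ((k : ℤ) - 1) (S - 1 - m) * chooseZ (S - m + 1) ((m : ℤ) - 1)
      = RHSF k (S - 2) (s + 3) := by
    have hz1 : chooseZ ((k : ℤ) - 1) (S - 1 - ((0 : ℕ) : ℤ))
        * chooseZ (S - ((0 : ℕ) : ℤ) + 1) (((0 : ℕ) : ℤ) - 1) = 0 := by
      have h0 : ((0 : ℕ) : ℤ) - 1 < 0 := by norm_num
      rw [chooseZ_neg_right h0, mul_zero]
    have hz2 : chooseZ ((k : ℤ) - 1) (S - 2 - ((s + 2 : ℕ) : ℤ))
        * chooseZ (S - 2 - ((s + 2 : ℕ) : ℤ) + 2) ((s + 2 : ℕ) : ℤ) = 0 := by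
      have h0 : S - 2 - ((s + 2 : ℕ) : ℤ) < 0 := by push_cast [hS]; omega
      rw [chooseZ_neg_right h0, zero_mul]
    calc ∑ m ∈ Finset.range (s + 3),
          chooseZ ((k : ℤ) - 1) (S - 1 - m) * chooseZ (S - m + 1) ((m : ℤ) - 1)
        = (∑ m ∈ Finset.range (s + 2),
            chooseZ ((k : ℤ) - 1) (S - 1 - ((m + 1 : ℕ) : ℤ))
              * chooseZ (S - ((m + 1 : ℕ) : ℤ) + 1) (((m + 1 : ℕ) : ℤ) - 1))
          + chooseZ ((k : ℤ) - 1) (S - 1 - ((0 : ℕ) : ℤ))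
              * chooseZ (S - ((0 : ℕ) : ℤ) + 1) (((0 : ℕ) : ℤ) - 1) :=
          Finset.sum_range_succ' _ (s + 2)
      _ = ∑ m ∈ Finset.range (s + 2),
            chooseZ ((k : ℤ) - 1) (S - 2 - (m : ℤ)) * chooseZ (S - 2 - (m : ℤ) + 2) (m : ℤ) := by
          rw [hz1, add_zero]
          refine Finset.sum_congr rfl fun m _ => ?_
          have e1 : S - 1 - ((m + 1 : ℕ) : ℤ) = S - 2 - (m : ℤ) := by push_cast; ring
          have e2 : S - ((m + 1 : ℕ) : ℤ) + 1 = S - 2 - (m : ℤ) + 2 := by push_cast; ring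
          have e3 : ((m + 1 : ℕ) : ℤ) - 1 = (m : ℤ) := by push_cast; ring
          rw [e1, e2, e3]
      _ = RHSF k (S - 2) (s + 3) := by
          rw [RHSF]
          conv_rhs => rw [Finset.sum_range_succ]
          rw [hz2, add_zero]
  rw [step1, step2, step3]; ring

lemma Tset_base (s : ℕ) : ((Tset 1 s).card : ℤ) = RHSF 1 s (s + 3) := by
  have hR : RHSF 1 s (s + 3) = (Nat.choose 2 s : ℤ) := by
    rw [RHSF]
    rw [Finset.sum_eq_single s]
    · have e1 : (s : ℤ) - (s : ℤ) = 0 := by ring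
      have e2 : ((1 : ℕ) : ℤ) - 1 = 0 := by norm_num
      rw [e1, e2]
      have : chooseZ 0 0 = 1 := by decide
      rw [this, one_mul]
      have : (0 : ℤ) + 2 = ((2 : ℕ) : ℤ) := by norm_num
      rw [this, chooseZ_natCast]
    · intro m _ hm
      rcases lt_or_gt_of_ne hm with h | h
      · rw [chooseZ_eq_zero_of_lt (by omega), zero_mul]
      · rw [chooseZ_neg_right (by omega), zero_mul]
    · intro h
      exact absurd (Finset.mem_range.2 (by omega)) h
  rw [hR]
  congr 1
  match s with
  | 0 => decide
  | 1 => decide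
  | 2 => decide
  | (m+3) =>
    rw [Nat.choose_eq_zero_of_lt (by omega), Finset.card_eq_zero,
      Finset.eq_empty_iff_forall_notMem]
    intro g hg
    simp only [Tset, mem_filter, mem_univ, true_and] at hg
    obtain ⟨h0, hl, hs⟩ := hg
    rw [Fin.sum_univ_two] at hs
    have : g (Fin.last 1) = g 1 := rfl
    omega

lemma Tset_count : ∀ k, 1 ≤ k → ∀ s : ℕ, ((Tset k s).card : ℤ) = RHSF k s (s + 3) := by
  refine Nat.le_induction Tset_base ?_
  intro k hk IH s
  rw [Tset_card_step hk s]
  have cast_sum : ((∑ v : Fin 3, (if (v : ℕ) ≤ s then (Tset k (s - (v : ℕ))).card else 0) : ℕ) : ℤ)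
      = ∑ v : Fin 3, (if (v : ℕ) ≤ s then ((Tset k (s - (v : ℕ))).card : ℤ) else 0) := by
    push_cast [apply_ite (Nat.cast : ℕ → ℤ)]
    rfl
  rw [cast_sum]
  have key : ∀ v : Fin 3,
      (if (v : ℕ) ≤ s then ((Tset k (s - (v : ℕ))).card : ℤ) else 0)
        = RHSF k ((s : ℤ) - (v : ℕ)) (s + 3) := by
    intro v
    split_ifs with hv
    · rw [IH (s - v)]
      have e : ((s - (v : ℕ) : ℕ) : ℤ) = (s : ℤ) - (v : ℕ) := by omega
      rw [e]
      exact (RHSF_ext (M := s - (v : ℕ) + 3) (M' := s + 3) (by omega)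
        (by push_cast; omega)).symm
    · exact (RHSF_zero (by push_cast; omega) _).symm
  rw [Finset.sum_congr rfl fun v _ => key v, Fin.sum_univ_three]
  have e0 : ((0 : Fin 3) : ℕ) = 0 := rfl
  have e1 : ((1 : Fin 3) : ℕ) = 1 := rfl
  have e2 : ((2 : Fin 3) : ℕ) = 2 := rfl
  rw [e0, e1, e2, RHSF_rec hk s]
  push_cast
  ring

/-! ### The bijection with dominating sets -/

def gv (k : ℕ) (g : Fin (k + 1) → Fin 3) (j : ℕ) : ℕ :=
  if h : j < k + 1 then (g ⟨j, h⟩ : ℕ) else 0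

def gpos (k : ℕ) (g : Fin (k + 1) → Fin 3) (i : ℕ) : ℕ :=
  i + ∑ j ∈ Finset.range (i + 1), gv k g j

def Sg (n k : ℕ) (hn : 0 < n) (g : Fin (k + 1) → Fin 3) : Finset (Fin n) :=
  univ.image fun i : Fin k => (⟨gpos k g i.val % n, Nat.mod_lt _ hn⟩ : Fin n)

lemma gv_le (k : ℕ) (g : Fin (k + 1) → Fin 3) (j : ℕ) : gv k g j ≤ 2 := by
  rw [gv]; split
  · exact Nat.lt_succ_iff.mp (Fin.is_lt _)
  · omega

lemma gv_eq (k : ℕ) (g : Fin (k + 1) → Fin 3) (i : Fin (k + 1)) :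
    gv k g i.val = (g i : ℕ) := by
  rw [gv, dif_pos i.isLt]

lemma gpos_succ (k : ℕ) (g : Fin (k + 1) → Fin 3) (i : ℕ) :
    gpos k g (i + 1) = gpos k g i + (gv k g (i + 1) + 1) := by
  rw [gpos, gpos, Finset.sum_range_succ]; ring

lemma gpos_zero (k : ℕ) (g : Fin (k + 1) → Fin 3) : gpos k g 0 = gv k g 0 := by
  rw [gpos, Finset.sum_range_one]; ring

lemma gpos_strictMono (k : ℕ) (g : Fin (k + 1) → Fin 3) : StrictMono (gpos k g) := by
  apply strictMono_nat_of_lt_succ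
  intro i; rw [gpos_succ]; omega

lemma gv_sum_eq (k : ℕ) (g : Fin (k + 1) → Fin 3) :
    ∑ j ∈ Finset.range (k + 1), gv k g j = ∑ i, (g i : ℕ) := by
  rw [Finset.sum_range fun j => gv k g j]
  exact Finset.sum_congr rfl fun i _ => gv_eq k g i

lemma gpos_last {k s : ℕ} (hk : 1 ≤ k) {g : Fin (k + 1) → Fin 3}
    (hg : ∑ i, (g i : ℕ) = s) : gpos k g (k - 1) + gv k g k = k - 1 + s := by
  have h1 : ∑ j ∈ Finset.range (k + 1), gv k g j = s := by rw [gv_sum_eq, hg]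
  rw [Finset.sum_range_succ] at h1
  rw [gpos, show k - 1 + 1 = k from by omega]
  omega

lemma gpos_lt {n k : ℕ} (hk : 1 ≤ k) (hkn : k ≤ n) {g : Fin (k + 1) → Fin 3}
    (hg : ∑ i, (g i : ℕ) = n - k) {i : ℕ} (hi : i < k) : gpos k g i < n := by
  have h1 := gpos_last hk hg
  have h2 : gpos k g i ≤ gpos k g (k - 1) := (gpos_strictMono k g).monotone (by omega)
  omega

lemma mem_Sg {n k : ℕ} (hn : 0 < n) (hk : 1 ≤ k) (hkn : k ≤ n) {g : Fin (k + 1) → Fin 3}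
    (hg : ∑ i, (g i : ℕ) = n - k) {v : Fin n} :
    v ∈ Sg n k hn g ↔ ∃ i < k, gpos k g i = v.val := by
  simp only [Sg, Finset.mem_image, Finset.mem_univ, true_and]
  constructor
  · rintro ⟨i, rfl⟩
    exact ⟨i.val, i.isLt, (Nat.mod_eq_of_lt (gpos_lt hk hkn hg i.isLt)).symm⟩
  · rintro ⟨i, hik, hi⟩
    refine ⟨⟨i, hik⟩, ?_⟩
    ext
    simpa [Nat.mod_eq_of_lt (gpos_lt hk hkn hg hik)] using hi

lemma card_Sg {n k : ℕ} (hn : 0 < n) (hk : 1 ≤ k) (hkn : k ≤ n) {g : Fin (k + 1) → Fin 3}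
    (hg : ∑ i, (g i : ℕ) = n - k) : (Sg n k hn g).card = k := by
  rw [Sg, Finset.card_image_of_injective _ ?_, Finset.card_univ, Fintype.card_fin]
  intro i j hij
  have : gpos k g i.val % n = gpos k g j.val % n := congrArg Fin.val hij
  rw [Nat.mod_eq_of_lt (gpos_lt hk hkn hg i.isLt),
    Nat.mod_eq_of_lt (gpos_lt hk hkn hg j.isLt)] at this
  exact Fin.ext ((gpos_strictMono k g).injective this)

lemma Sg_mem_of_lt {n k : ℕ} (hn : 0 < n) (hk : 1 ≤ k) (hkn : k ≤ n)
    {g : Fin (k + 1) → Fin 3} (hg : ∑ i, (g i : ℕ) = n - k) {i : ℕ} (hik : i < k) :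
    (⟨gpos k g i, gpos_lt hk hkn hg hik⟩ : Fin n) ∈ Sg n k hn g := by
  rw [mem_Sg hn hk hkn hg]
  exact ⟨i, hik, rfl⟩

lemma Sg_dominating {n k : ℕ} (hn : 0 < n) (hk : 1 ≤ k) (hkn : k ≤ n)
    {g : Fin (k + 1) → Fin 3} (hgT : g ∈ Tset k (n - k)) :
    IsDominatingSet (SimpleGraph.pathGraph n) (Sg n k hn g) := by
  obtain ⟨h0, hl, hg⟩ : (g 0 : ℕ) ≤ 1 ∧ (g (Fin.last k) : ℕ) ≤ 1 ∧ ∑ i, (g i : ℕ) = n - k := by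
    simpa [Tset] using hgT
  have hgv0 : gv k g 0 ≤ 1 := by rw [show (0:ℕ) = (0 : Fin (k+1)).val from rfl, gv_eq]; exact h0
  have hgvk : gv k g k ≤ 1 := by
    have h := gv_eq k g (Fin.last k)
    rw [Fin.val_last] at h
    omega
  intro v hv
  have hnotmem : ∀ i < k, gpos k g i ≠ v.val := by
    intro i hik hi
    exact hv ((mem_Sg hn hk hkn hg).2 ⟨i, hik, hi⟩)
  have hlast := gpos_last hk hg
  by_cases hF : gpos k g 0 ≤ v.val
  · -- there is a largest index i with gpos ≤ v
    set F := (Finset.range k).filter (fun i => gpos k g i ≤ v.val) with hFdef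
    have hne : F.Nonempty := ⟨0, by simp only [hFdef, Finset.mem_filter, Finset.mem_range]; exact ⟨hk, hF⟩⟩
    set i := F.max' hne with hidef
    have hiF : i ∈ F := F.max'_mem hne
    obtain ⟨hik, hile⟩ : i < k ∧ gpos k g i ≤ v.val := by
      simpa [hFdef] using hiF
    have hilt : gpos k g i < v.val := lt_of_le_of_ne hile (hnotmem i hik)
    by_cases hitop : i = k - 1
    · -- top gap
      have hv1 : v.val < n := v.isLt
      have hkk : gpos k g i + gv k g k = k - 1 + (n - k) := by rw [hitop]; exact hlast
      have : v.val = gpos k g i + 1 := by omega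
      refine ⟨⟨gpos k g i, gpos_lt hk hkn hg hik⟩, Sg_mem_of_lt hn hk hkn hg hik, ?_⟩
      rw [SimpleGraph.pathGraph_adj]
      left
      show gpos k g i + 1 = v.val
      omega
    · have hik1 : i + 1 < k := by omega
      have hnF : i + 1 ∉ F := fun h => by
        have := F.le_max' (i + 1) h
        omega
      have hgt : v.val < gpos k g (i + 1) := by
        by_contra h
        exact hnF (by simp [hFdef, hik1]; omega)
      have hstep : gpos k g (i + 1) ≤ gpos k g i + 3 := by
        have := gv_le k g (i + 1)
        rw [gpos_succ]; omega
      rcases (by omega : v.val = gpos k g i + 1 ∨ v.val = gpos k g i + 2) with h1 | h2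
      · refine ⟨⟨gpos k g i, gpos_lt hk hkn hg hik⟩, Sg_mem_of_lt hn hk hkn hg hik, ?_⟩
        rw [SimpleGraph.pathGraph_adj]
        left
        show gpos k g i + 1 = v.val
        omega
      · have hne2 : gpos k g (i + 1) ≠ v.val := hnotmem (i + 1) hik1
        have : gpos k g (i + 1) = v.val + 1 := by omega
        refine ⟨⟨gpos k g (i + 1), gpos_lt hk hkn hg hik1⟩,
          Sg_mem_of_lt hn hk hkn hg hik1, ?_⟩
        rw [SimpleGraph.pathGraph_adj]
        right
        show v.val + 1 = gpos k g (i + 1)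
        omega
  · -- v is below the first element
    push_neg at hF
    have h01 : gpos k g 0 ≤ 1 := by rw [gpos_zero]; exact hgv0
    have : v.val = 0 ∧ gpos k g 0 = 1 := by omega
    refine ⟨⟨gpos k g 0, gpos_lt hk hkn hg hk⟩, Sg_mem_of_lt hn hk hkn hg hk, ?_⟩
    rw [SimpleGraph.pathGraph_adj]
    right
    show v.val + 1 = gpos k g 0
    omega

section Surj

lemma exists_gap_vector {n k : ℕ} (hn : 1 ≤ n) (hk : 1 ≤ k) (hkn : k ≤ n)
    {S : Finset (Fin n)} (hcard : S.card = k)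
    (hdom : IsDominatingSet (SimpleGraph.pathGraph n) S) :
    ∃ g ∈ Tset k (n - k), Sg n k hn g = S := by
  classical
  have hkne : ¬ k = 0 := by omega
  have hk1' : k - 1 < k := by omega
  have hn0 : 0 < n := hn
  obtain ⟨a, ha⟩ : ∃ a : Fin k ↪o Fin n, a = S.orderEmbOfFin hcard := ⟨_, rfl⟩
  have amem : ∀ i, a i ∈ S := fun i => ha ▸ S.orderEmbOfFin_mem hcard i
  have arange : ∀ x ∈ S, ∃ i, a i = x := by
    intro x hx
    have h2 := S.range_orderEmbOfFin hcard
    rw [Set.ext_iff] at h2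
    rw [ha]
    exact (h2 x).2 hx
  have amono : StrictMono a := a.strictMono
  have hmin : ∀ x ∈ S, (a ⟨0, hk⟩).val ≤ x.val := by
    intro x hx
    obtain ⟨i, rfl⟩ := arange x hx
    have hle : (⟨0, hk⟩ : Fin k) ≤ i := by
      rw [Fin.le_def]; exact Nat.zero_le _
    exact amono.monotone hle
  have hmax : ∀ x ∈ S, x.val ≤ (a ⟨k - 1, hk1'⟩).val := by
    intro x hx
    obtain ⟨i, rfl⟩ := arange x hx
    have hle : i ≤ (⟨k - 1, hk1'⟩ : Fin k) := by
      rw [Fin.le_def]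
      show i.val ≤ k - 1
      have := i.isLt
      omega
    exact amono.monotone hle
  -- A1 : the smallest element is at most 1
  have A1 : (a ⟨0, hk⟩).val ≤ 1 := by
    by_contra hA
    push_neg at hA
    have h0S : (⟨0, by omega⟩ : Fin n) ∉ S := fun h => by
      have h2 : (a ⟨0, hk⟩).val ≤ 0 := hmin _ h
      omega
    obtain ⟨u, huS, hadj⟩ := hdom _ h0S
    rw [SimpleGraph.pathGraph_adj] at hadj
    have h2 := hmin u huS
    have hadj' : u.val + 1 = 0 ∨ 0 + 1 = u.val := hadj
    omega
  -- A2 : the largest element is at least n - 2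
  have A2 : n ≤ (a ⟨k - 1, hk1'⟩).val + 2 := by
    by_contra hA
    push_neg at hA
    have hS : (⟨n - 1, by omega⟩ : Fin n) ∉ S := fun h => by
      have h2 : n - 1 ≤ (a ⟨k - 1, hk1'⟩).val := hmax _ h
      omega
    obtain ⟨u, huS, hadj⟩ := hdom _ hS
    rw [SimpleGraph.pathGraph_adj] at hadj
    have h2 := hmax u huS
    have hun : u.val < n := u.isLt
    have hadj' : u.val + 1 = n - 1 ∨ n - 1 + 1 = u.val := hadj
    omega
  -- A3 : consecutive gaps are at most 3
  have A3 : ∀ j, (h : j + 1 < k) →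
      (a ⟨j + 1, h⟩).val ≤ (a ⟨j, Nat.lt_of_succ_lt h⟩).val + 3 := by
    intro j hj
    have hjk : j < k := Nat.lt_of_succ_lt hj
    by_contra hA
    push_neg at hA
    have hsplit : ∀ x ∈ S, x.val ≤ (a ⟨j, hjk⟩).val ∨ (a ⟨j + 1, hj⟩).val ≤ x.val := by
      intro x hx
      obtain ⟨i, rfl⟩ := arange x hx
      rcases le_or_gt i.val j with h | h
      · left
        have hle : i ≤ (⟨j, hjk⟩ : Fin k) := by
          rw [Fin.le_def]; exact h
        exact amono.monotone hle
      · right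
        have hle : (⟨j + 1, hj⟩ : Fin k) ≤ i := by
          rw [Fin.le_def]
          show j + 1 ≤ i.val
          omega
        exact amono.monotone hle
    have hvlt : (a ⟨j, hjk⟩).val + 2 < n := by
      have h1 : (a ⟨j + 1, hj⟩).val < n := (a ⟨j + 1, hj⟩).isLt
      omega
    have hvS : (⟨(a ⟨j, hjk⟩).val + 2, hvlt⟩ : Fin n) ∉ S := fun h => by
      rcases hsplit _ h with h' | h'
      · have hx : (a ⟨j, hjk⟩).val + 2 ≤ (a ⟨j, hjk⟩).val := h'
        omega
      · have hx : (a ⟨j + 1, hj⟩).val ≤ (a ⟨j, hjk⟩).val + 2 := h'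
        omega
    obtain ⟨u, huS, hadj⟩ := hdom _ hvS
    rw [SimpleGraph.pathGraph_adj] at hadj
    have hadj' : u.val + 1 = (a ⟨j, hjk⟩).val + 2
        ∨ (a ⟨j, hjk⟩).val + 2 + 1 = u.val := hadj
    rcases hsplit u huS with h' | h' <;> omega
  -- construct the gap vector
  obtain ⟨gd, hgd⟩ : ∃ gd : ℕ → ℕ, gd = fun j =>
      if j = 0 then (a ⟨0, hk⟩).val
      else if h : j < k then (a ⟨j, h⟩).val - (a ⟨j - 1, Nat.lt_of_le_of_lt (Nat.sub_le j 1) h⟩).val - 1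
      else n - 1 - (a ⟨k - 1, Nat.sub_lt hk Nat.one_pos⟩).val := ⟨_, rfl⟩
  have hgd_le : ∀ j ≤ k, gd j ≤ 2 := by
    intro j hj
    rcases Nat.eq_zero_or_pos j with rfl | hj0
    · simp [hgd]; omega
    rcases lt_or_ge j k with hjk | hjk
    · have h3 := A3 (j - 1) (by omega)
      simp only [hgd, if_neg (by omega : ¬ j = 0), dif_pos hjk]
      have : (⟨j - 1 + 1, by omega⟩ : Fin k) = ⟨j, hjk⟩ := by ext; simp; omega
      rw [this] at h3
      omega
    · simp only [hgd, if_neg (by omega : ¬ j = 0), dif_neg (by omega : ¬ j < k)]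
      omega
  obtain ⟨g, hgdef⟩ : ∃ g : Fin (k + 1) → Fin 3,
      g = fun i => ⟨min (gd i.val) 2, by omega⟩ := ⟨_, rfl⟩
  have hgval : ∀ i : Fin (k + 1), (g i : ℕ) = gd i.val := by
    intro i
    have := hgd_le i.val (by omega)
    simp [hgdef]
    omega
  have hgv : ∀ j ≤ k, gv k g j = gd j := by
    intro j hj
    have hjk1 : j < k + 1 := Nat.lt_succ_of_le hj
    have h1 : gv k g j = (g ⟨j, hjk1⟩ : ℕ) := gv_eq k g ⟨j, hjk1⟩
    rw [h1, hgval]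
  -- positions recover the elements
  have pos_eq : ∀ j, (h : j < k) → gpos k g j = (a ⟨j, h⟩).val := by
    intro j
    induction j with
    | zero => intro h; rw [gpos_zero, hgv 0 (by omega)]; simp [hgd]
    | succ m ih =>
      intro h
      have hm : m < k := by omega
      have hlt : (a ⟨m, hm⟩).val < (a ⟨m + 1, h⟩).val := amono (by simp [Fin.lt_def])
      rw [gpos_succ, ih hm, hgv (m + 1) (by omega)]
      simp only [hgd, if_neg (Nat.succ_ne_zero m), dif_pos h]
      have : (⟨m + 1 - 1, by omega⟩ : Fin k) = ⟨m, hm⟩ := by ext; simp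
      rw [this]
      omega
  have hak1 : k - 1 ≤ (a ⟨k - 1, hk1'⟩).val := by
    have := pos_eq (k - 1) hk1'
    have h2 : k - 1 ≤ gpos k g (k - 1) := by rw [gpos]; omega
    omega
  -- sum condition
  have hsum : ∑ i, (g i : ℕ) = n - k := by
    rw [← gv_sum_eq, Finset.sum_range_succ, hgv k (le_refl k)]
    have h1 : gpos k g (k - 1) = (k - 1) + ∑ j ∈ Finset.range k, gv k g j := by
      rw [gpos, show k - 1 + 1 = k from by omega]
    have h2 := pos_eq (k - 1) hk1'
    have h3 : gd k = n - 1 - (a ⟨k - 1, hk1'⟩).val := by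
      simp only [hgd]
      rw [if_neg hkne, dif_neg (lt_irrefl k)]
    have h4 : (a ⟨k - 1, hk1'⟩).val < n := (a _).isLt
    omega
  refine ⟨g, ?_, ?_⟩
  · simp only [Tset, Finset.mem_filter, Finset.mem_univ, true_and]
    refine ⟨?_, ?_, hsum⟩
    · have h0 : (g 0 : ℕ) = gd 0 := hgval 0
      have h1 : gd 0 = (a ⟨0, hk⟩).val := by simp [hgd]
      omega
    · have h0 : (g (Fin.last k) : ℕ) = gd k := by
        have := hgval (Fin.last k)
        rwa [Fin.val_last] at this
      have h3 : gd k = n - 1 - (a ⟨k - 1, hk1'⟩).val := by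
        simp only [hgd]
        rw [if_neg hkne, dif_neg (lt_irrefl k)]
      have h4 : (a ⟨k - 1, hk1'⟩).val < n := (a _).isLt
      omega
  · ext v
    rw [mem_Sg hn0 hk hkn hsum]
    constructor
    · rintro ⟨i, hik, hi⟩
      rw [pos_eq i hik] at hi
      have : a ⟨i, hik⟩ = v := Fin.ext hi
      rw [← this]; exact amem _
    · intro hv
      obtain ⟨i, rfl⟩ := arange v hv
      exact ⟨i.val, i.isLt, by rw [pos_eq i.val i.isLt]⟩

end Surj

lemma Sg_inj {n k : ℕ} (hn : 0 < n) (hk : 1 ≤ k) (hkn : k ≤ n)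
    {g g' : Fin (k + 1) → Fin 3} (hgT : g ∈ Tset k (n - k)) (hgT' : g' ∈ Tset k (n - k))
    (h : Sg n k hn g = Sg n k hn g') : g = g' := by
  have hs : ∑ i, (g i : ℕ) = n - k := by
    have := hgT; simp only [Tset, Finset.mem_filter] at this; exact this.2.2.2
  have hs' : ∑ i, (g' i : ℕ) = n - k := by
    have := hgT'; simp only [Tset, Finset.mem_filter] at this; exact this.2.2.2
  have h1 := card_Sg hn hk hkn hs
  have h2 := card_Sg hn hk hkn hs'
  have mono : ∀ (g0 : Fin (k + 1) → Fin 3), (∑ i, (g0 i : ℕ) = n - k) →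
      StrictMono (fun i : Fin k => (⟨gpos k g0 i.val % n, Nat.mod_lt _ hn⟩ : Fin n)) := by
    intro g0 hs0 i j hij
    rw [Fin.lt_def]
    show gpos k g0 i.val % n < gpos k g0 j.val % n
    rw [Nat.mod_eq_of_lt (gpos_lt hk hkn hs0 i.isLt),
      Nat.mod_eq_of_lt (gpos_lt hk hkn hs0 j.isLt)]
    exact gpos_strictMono k g0 (Fin.lt_def.mp hij)
  have e1 : (fun i : Fin k => (⟨gpos k g i.val % n, Nat.mod_lt _ hn⟩ : Fin n))
      = ⇑((Sg n k hn g').orderEmbOfFin h2) :=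
    Finset.orderEmbOfFin_unique h2
      (fun i => by rw [← h, Sg]; exact Finset.mem_image_of_mem _ (Finset.mem_univ i)) (mono g hs)
  have e2 : (fun i : Fin k => (⟨gpos k g' i.val % n, Nat.mod_lt _ hn⟩ : Fin n))
      = ⇑((Sg n k hn g').orderEmbOfFin h2) :=
    Finset.orderEmbOfFin_unique h2
      (fun i => by rw [Sg]; exact Finset.mem_image_of_mem _ (Finset.mem_univ i)) (mono g' hs')
  have e3 := e1.trans e2.symm
  have hpos : ∀ i, (hik : i < k) → gpos k g i = gpos k g' i := by
    intro i hik
    have := congrFun e3 ⟨i, hik⟩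
    have hval : gpos k g i % n = gpos k g' i % n := congrArg Fin.val this
    rwa [Nat.mod_eq_of_lt (gpos_lt hk hkn hs hik),
      Nat.mod_eq_of_lt (gpos_lt hk hkn hs' hik)] at hval
  have hgv : ∀ j ≤ k, gv k g j = gv k g' j := by
    intro j hj
    rcases Nat.eq_zero_or_pos j with rfl | hj0
    · have a1 := gpos_zero k g
      have a2 := gpos_zero k g'
      have := hpos 0 hk
      omega
    obtain ⟨m, rfl⟩ : ∃ m, j = m + 1 := ⟨j - 1, by omega⟩
    rcases lt_or_ge (m + 1) k with hmk | hmk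
    · have a1 := gpos_succ k g m
      have a2 := gpos_succ k g' m
      have b1 := hpos m (by omega)
      have b2 := hpos (m + 1) hmk
      omega
    · -- m + 1 = k : use the total sum
      have hjk : m + 1 = k := by omega
      have c1 : ∑ x ∈ Finset.range (k + 1), gv k g x = n - k := by rw [gv_sum_eq, hs]
      have c2 : ∑ x ∈ Finset.range (k + 1), gv k g' x = n - k := by rw [gv_sum_eq, hs']
      rw [Finset.sum_range_succ] at c1 c2
      have d1 : gpos k g (k - 1) = (k - 1) + ∑ x ∈ Finset.range k, gv k g x := by
        rw [gpos, show k - 1 + 1 = k from by omega]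
      have d2 : gpos k g' (k - 1) = (k - 1) + ∑ x ∈ Finset.range k, gv k g' x := by
        rw [gpos, show k - 1 + 1 = k from by omega]
      have := hpos (k - 1) (by omega)
      rw [hjk]
      omega
  funext i
  have hi := gv_eq k g i
  have hi' := gv_eq k g' i
  have := hgv i.val (by omega)
  exact Fin.ext (by omega)

lemma main_bij (n k : ℕ) (hn : 1 ≤ n) (hk1 : 1 ≤ k) (hk2 : k ≤ n) :
    domCount (SimpleGraph.pathGraph n) k = (Tset k (n - k)).card := by
  have hn0 : 0 < n := hn
  rw [domCount]
  have hset : {S : Finset (Fin n) | IsDominatingSet (SimpleGraph.pathGraph n) S ∧ S.card = k}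
      = Sg n k hn0 '' ↑(Tset k (n - k)) := by
    ext S
    constructor
    · rintro ⟨hdom, hcard⟩
      obtain ⟨g, hgT, hSg⟩ := exists_gap_vector hn hk1 hk2 hcard hdom
      exact ⟨g, hgT, hSg⟩
    · rintro ⟨g, hgT, rfl⟩
      have hgT2 : g ∈ Tset k (n - k) := hgT
      have hs : ∑ i, (g i : ℕ) = n - k := by
        have := hgT2; simp only [Tset, Finset.mem_filter] at this; exact this.2.2.2
      exact ⟨Sg_dominating hn0 hk1 hk2 hgT2, card_Sg hn0 hk1 hk2 hs⟩
  rw [hset, Set.ncard_image_of_injOn ?_, Set.ncard_coe_finset]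
  intro g hg g' hg' h
  exact Sg_inj hn0 hk1 hk2 (Finset.mem_coe.mp hg) (Finset.mem_coe.mp hg') h

theorem domCount_path_formula (n k : ℕ) (hn : 1 ≤ n) (hk1 : 1 ≤ k) (hk2 : k ≤ n) :
    (domCount (SimpleGraph.pathGraph n) k : ℤ) =
      ∑ m ∈ Finset.range ((n - k) / 2 + 2),
        chooseZ ((k : ℤ) - 1) ((n : ℤ) - k - m) *
          chooseZ ((n : ℤ) - k - m + 2) m := by
  have hs : ((n - k : ℕ) : ℤ) = (n : ℤ) - k := by omega
  rw [main_bij n k hn hk1 hk2, Tset_count k hk1 (n - k), RHSF]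
  have hsub : Finset.range ((n - k) / 2 + 2) ⊆ Finset.range ((n - k) + 3) :=
    Finset.range_subset_range.2 (by omega)
  have hz : ∀ m ∈ Finset.range ((n - k) + 3), m ∉ Finset.range ((n - k) / 2 + 2) →
      chooseZ ((k : ℤ) - 1) (((n - k : ℕ) : ℤ) - m) * chooseZ (((n - k : ℕ) : ℤ) - m + 2) m
        = 0 := by
    intro m hm hm2
    simp only [Finset.mem_range] at hm hm2
    rw [chooseZ_eq_zero_of_lt (show ((n - k : ℕ) : ℤ) - m + 2 < m by omega), mul_zero]
  rw [← Finset.sum_subset hsub hz]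
  exact Finset.sum_congr rfl fun m _ => by rw [hs]
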